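/- For m ≥ 3, let H_m be the graph obtained from m disjoint copies of the cycle C₄ by selecting one vertex in each copy and identifying these m selected vertices into a single vertex. Then o(H_m) = 𝒩 and γ_MB(H_m) = γ(H_m) = m + 1. -/

import Mathlib

/-!
Formalization of the Maker-Breaker domination game (MBD game).

In the MBD game on a graph `G`, Dominator and Staller alternately select
previously unplayed vertices.  Dominator wins when the set of vertices he has
selected is a dominating set of `G`; Staller wins when she has selected a
vertex of every dominating set of `G`, which happens exactly when the closed
neighbourhood of some vertex is entirely contained in her set of selected
vertices.
-/

/-- `D` is a dominating set of `G` (as a finset of vertices). -/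
def IsDomSet {V : Type*} (G : SimpleGraph V) (D : Finset V) : Prop :=
  ∀ v, v ∈ D ∨ ∃ u ∈ D, G.Adj u v

/-- Staller (whose selected vertices form `S`) has won: she owns the whole
closed neighbourhood of some vertex, hence a vertex of every dominating set. -/
def StallerWon {V : Type*} (G : SimpleGraph V) (S : Finset V) : Prop :=
  ∃ v, v ∈ S ∧ ∀ u, G.Adj v u → u ∈ S

section Game

variable {V : Type*} [DecidableEq V]

mutual
  /-- Position with Dominator's vertices `D`, Staller's vertices `S` and
  Dominator to move: Dominator can guarantee to complete a dominating set
  using at most `k` further moves of his own. -/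
  inductive DomWinD (G : SimpleGraph V) : Finset V → Finset V → ℕ → Prop where
    | done (D S : Finset V) (k : ℕ) : IsDomSet G D → DomWinD G D S k
    | step (D S : Finset V) (k : ℕ) (v : V) : v ∉ D → v ∉ S →
        DomWinS G (insert v D) S k → DomWinD G D S (k + 1)

  /-- Position with Dominator's vertices `D`, Staller's vertices `S` and
  Staller to move: Dominator can guarantee to complete a dominating set
  using at most `k` further moves of his own. -/
  inductive DomWinS (G : SimpleGraph V) : Finset V → Finset V → ℕ → Prop where
    | done (D S : Finset V) (k : ℕ) : IsDomSet G D → DomWinS G D S k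
    | step (D S : Finset V) (k : ℕ) : (∃ w, w ∉ D ∧ w ∉ S) →
        (∀ w, w ∉ D → w ∉ S → DomWinD G D (insert w S) k) → DomWinS G D S k
end

mutual
  /-- Position with Dominator's vertices `D`, Staller's vertices `S` and
  Staller to move: Staller can guarantee to claim a whole closed neighbourhood
  using at most `k` further moves of her own. -/
  inductive StalWinS (G : SimpleGraph V) : Finset V → Finset V → ℕ → Prop where
    | done (D S : Finset V) (k : ℕ) : StallerWon G S → StalWinS G D S k
    | step (D S : Finset V) (k : ℕ) (w : V) : w ∉ D → w ∉ S →
        StalWinD G D (insert w S) k → StalWinS G D S (k + 1)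

  /-- Position with Dominator's vertices `D`, Staller's vertices `S` and
  Dominator to move: Staller can guarantee to claim a whole closed
  neighbourhood using at most `k` further moves of her own. -/
  inductive StalWinD (G : SimpleGraph V) : Finset V → Finset V → ℕ → Prop where
    | done (D S : Finset V) (k : ℕ) : StallerWon G S → StalWinD G D S k
    | step (D S : Finset V) (k : ℕ) : (∃ v, v ∉ D ∧ v ∉ S) →
        (∀ v, v ∉ D → v ∉ S → StalWinS G (insert v D) S k) → StalWinD G D S k
end

/-- `γ_MB(G)`: minimum number of Dominator's moves with which he can guarantee
to win the D-game (Dominator moves first); `⊤` if he cannot win it. -/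
noncomputable def gammaMB (G : SimpleGraph V) : ℕ∞ :=
  sInf {k : ℕ∞ | ∃ n : ℕ, k = n ∧ DomWinD G ∅ ∅ n}

/-- `γ_MB'(G)`: minimum number of Dominator's moves with which he can guarantee
to win the S-game (Staller moves first); `⊤` if he cannot win it. -/
noncomputable def gammaMB' (G : SimpleGraph V) : ℕ∞ :=
  sInf {k : ℕ∞ | ∃ n : ℕ, k = n ∧ DomWinS G ∅ ∅ n}

/-- `γ_SMB(G)`: minimum number of Staller's moves with which she can guarantee
to win the D-game (Dominator moves first); `⊤` if she cannot win it. -/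
noncomputable def gammaSMB (G : SimpleGraph V) : ℕ∞ :=
  sInf {k : ℕ∞ | ∃ n : ℕ, k = n ∧ StalWinD G ∅ ∅ n}

/-- `γ_SMB'(G)`: minimum number of Staller's moves with which she can guarantee
to win the S-game (Staller moves first); `⊤` if she cannot win it. -/
noncomputable def gammaSMB' (G : SimpleGraph V) : ℕ∞ :=
  sInf {k : ℕ∞ | ∃ n : ℕ, k = n ∧ StalWinS G ∅ ∅ n}

/-- Outcome `𝒟`: Dominator has a winning strategy no matter who starts. -/
def OutcomeD (G : SimpleGraph V) : Prop :=
  (∃ n, DomWinD G ∅ ∅ n) ∧ (∃ n, DomWinS G ∅ ∅ n)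

/-- Outcome `𝒮`: Staller has a winning strategy no matter who starts. -/
def OutcomeS (G : SimpleGraph V) : Prop :=
  (∃ n, StalWinD G ∅ ∅ n) ∧ (∃ n, StalWinS G ∅ ∅ n)

/-- Outcome `𝒩`: the first player has a winning strategy. -/
def OutcomeN (G : SimpleGraph V) : Prop :=
  (∃ n, DomWinD G ∅ ∅ n) ∧ (∃ n, StalWinS G ∅ ∅ n)

end Game

/-- The corona product `G ⊙ H`: one copy of `G`, a copy of `H` for every
vertex of `G`, and the `i`-th vertex of `G` joined to every vertex of the
`i`-th copy of `H`. -/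
def coronaProd {α β : Type*} (G : SimpleGraph α) (H : SimpleGraph β) :
    SimpleGraph (α ⊕ α × β) where
  Adj x y :=
    match x, y with
    | Sum.inl a, Sum.inl a' => G.Adj a a'
    | Sum.inl a, Sum.inr p => a = p.1
    | Sum.inr p, Sum.inl a => a = p.1
    | Sum.inr p, Sum.inr q => p.1 = q.1 ∧ H.Adj p.2 q.2
  symm := by
    constructor
    rintro (a | p) (a' | q) h
    · exact G.adj_symm h
    · exact h
    · exact h
    · exact ⟨h.1.symm, H.adj_symm h.2⟩
  loopless := by
    constructor
    rintro (a | p) h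
    · exact G.irrefl h
    · exact H.irrefl h.2

/-- The domination number `γ(G)` of a finite graph. -/
noncomputable def domNumber {V : Type*} [Fintype V] (G : SimpleGraph V) : ℕ :=
  sInf {n : ℕ | ∃ D : Finset V, D.card = n ∧ IsDomSet G D}

/-- `v` is a dominating vertex: it is adjacent to all other vertices. -/
def IsDomVertex {V : Type*} (G : SimpleGraph V) (v : V) : Prop :=
  ∀ u, u ≠ v → G.Adj v u

/-- `v` is an isolated vertex (degree `0`). -/
def IsIsolatedVertex {V : Type*} (G : SimpleGraph V) (v : V) : Prop :=
  ∀ u, ¬ G.Adj v u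

/-- `v` is a leaf (degree `1`). -/
def IsLeaf {V : Type*} (G : SimpleGraph V) (v : V) : Prop :=
  ∃! u, G.Adj v u

/-- `v` is a strong support vertex: adjacent to at least two leaves. -/
def IsStrongSupport {V : Type*} (G : SimpleGraph V) (v : V) : Prop :=
  ∃ u w, u ≠ w ∧ G.Adj v u ∧ G.Adj v w ∧ IsLeaf G u ∧ IsLeaf G w

/-- The graph `H_m`, `m ≥ 3`, obtained from `m` disjoint copies of `C₄` by
identifying one chosen vertex of each copy into a single vertex (`none` is the
identified vertex and, for each `i : Fin m`, the `i`-th copy of `C₄` is the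
cycle  `none — (i,0) — (i,1) — (i,2) — none`). -/
def Hgraph (m : ℕ) : SimpleGraph (Option (Fin m × Fin 3)) :=
  SimpleGraph.fromRel (fun x y =>
    (x = none ∧ ∃ i : Fin m, y = some (i, 0) ∨ y = some (i, 2)) ∨
    (∃ i : Fin m, x = some (i, 0) ∧ y = some (i, 1)) ∨
    (∃ i : Fin m, x = some (i, 1) ∧ y = some (i, 2)))

section Adj
variable {m : ℕ}

lemma adj_none (i : Fin m) (t : Fin 3) (h : t ≠ 1) :
    (Hgraph m).Adj none (some (i, t)) := by
  fin_cases t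
  · exact ⟨by simp, Or.inl (Or.inl ⟨rfl, i, Or.inl rfl⟩)⟩
  · simp at h
  · exact ⟨by simp, Or.inl (Or.inl ⟨rfl, i, Or.inr rfl⟩)⟩

lemma adj_a_b (i : Fin m) : (Hgraph m).Adj (some (i,0)) (some (i,1)) :=
  ⟨by simp [Prod.ext_iff, Fin.ext_iff], Or.inl (Or.inr (Or.inl ⟨i, rfl, rfl⟩))⟩

lemma adj_b_d (i : Fin m) : (Hgraph m).Adj (some (i,1)) (some (i,2)) :=
  ⟨by simp [Prod.ext_iff, Fin.ext_iff], Or.inl (Or.inr (Or.inr ⟨i, rfl, rfl⟩))⟩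

lemma adj_a_iff (i : Fin m) (y) :
    (Hgraph m).Adj (some (i,0)) y ↔ y = none ∨ y = some (i,1) := by
  constructor
  · rintro ⟨hne, h | h⟩
    · rcases h with ⟨h, _⟩ | ⟨j, hj, hy⟩ | ⟨j, hj, hy⟩
      · simp at h
      · obtain rfl : i = j := by simpa [Prod.ext_iff] using hj
        exact Or.inr hy
      · simp [Prod.ext_iff, Fin.ext_iff] at hj
    · rcases h with ⟨hy, _⟩ | ⟨j, hj, hy⟩ | ⟨j, hj, hy⟩
      · exact Or.inl hy
      · simp [Prod.ext_iff, Fin.ext_iff] at hy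
      · simp [Prod.ext_iff, Fin.ext_iff] at hy
  · rintro (rfl | rfl)
    · exact ((adj_none i 0 (by decide)).symm)
    · exact adj_a_b i

lemma adj_d_iff (i : Fin m) (y) :
    (Hgraph m).Adj (some (i,2)) y ↔ y = none ∨ y = some (i,1) := by
  constructor
  · rintro ⟨hne, h | h⟩
    · rcases h with ⟨h, _⟩ | ⟨j, hj, hy⟩ | ⟨j, hj, hy⟩
      · simp at h
      · simp [Prod.ext_iff, Fin.ext_iff] at hj
      · simp [Prod.ext_iff, Fin.ext_iff] at hj
    · rcases h with ⟨hy, _⟩ | ⟨j, hj, hy⟩ | ⟨j, hj, hy⟩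
      · exact Or.inl hy
      · simp [Prod.ext_iff, Fin.ext_iff] at hy
      · obtain rfl : i = j := by simpa [Prod.ext_iff] using hy
        exact Or.inr hj
  · rintro (rfl | rfl)
    · exact ((adj_none i 2 (by decide)).symm)
    · exact (adj_b_d i).symm

lemma adj_b_iff (i : Fin m) (y) :
    (Hgraph m).Adj (some (i,1)) y ↔ y = some (i,0) ∨ y = some (i,2) := by
  constructor
  · rintro ⟨hne, h | h⟩
    · rcases h with ⟨h, _⟩ | ⟨j, hj, hy⟩ | ⟨j, hj, hy⟩
      · simp at h
      · simp [Prod.ext_iff, Fin.ext_iff] at hj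
      · obtain rfl : i = j := by simpa [Prod.ext_iff] using hj
        exact Or.inr hy
    · rcases h with ⟨hy, j, hj⟩ | ⟨j, hj, hy⟩ | ⟨j, hj, hy⟩
      · subst hy; simp [Prod.ext_iff, Fin.ext_iff] at hj
      · obtain rfl : i = j := by simpa [Prod.ext_iff] using hy
        exact Or.inl hj
      · simp [Prod.ext_iff, Fin.ext_iff] at hy
  · rintro (rfl | rfl)
    · exact (adj_a_b i).symm
    · exact adj_b_d i

end Adj
section Adj2
variable {m : ℕ}
lemma adj_none_iff (y) :
    (Hgraph m).Adj (none : Option (Fin m × Fin 3)) y ↔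
      ∃ i : Fin m, y = some (i,0) ∨ y = some (i,2) := by
  constructor
  · rintro ⟨hne, h | h⟩
    · rcases h with ⟨_, i, hy⟩ | ⟨j, hj, _⟩ | ⟨j, hj, _⟩
      · exact ⟨i, hy⟩
      · simp at hj
      · simp at hj
    · rcases h with ⟨hy, _⟩ | ⟨j, _, hy⟩ | ⟨j, _, hy⟩
      · exact absurd hy.symm hne
      · simp at hy
      · simp at hy
  · rintro ⟨i, rfl | rfl⟩
    · exact adj_none i 0 (by decide)
    · exact adj_none i 2 (by decide)
end Adj2
section Dom
variable {m : ℕ}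

/-- The three non-identified vertices of the `i`-th copy of `C₄`. -/
def Tcopy (m : ℕ) (i : Fin m) : Finset (Option (Fin m × Fin 3)) :=
  {some (i,0), some (i,1), some (i,2)}

lemma mem_Tcopy {i : Fin m} {v} :
    v ∈ Tcopy m i ↔ v = some (i,0) ∨ v = some (i,1) ∨ v = some (i,2) := by
  simp [Tcopy]

lemma Tcopy_ne {i j : Fin m} (h : i ≠ j) {u v}
    (hu : u ∈ Tcopy m i) (hv : v ∈ Tcopy m j) : u ≠ v := by
  rcases mem_Tcopy.mp hu with rfl | rfl | rfl <;>
    rcases mem_Tcopy.mp hv with rfl | rfl | rfl <;>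
    simp_all [Prod.ext_iff, Fin.ext_iff]

lemma isDom_of (D : Finset (Option (Fin m × Fin 3))) (hc : none ∈ D)
    (h : ∀ i, ∃ u ∈ D, u ∈ Tcopy m i) : IsDomSet (Hgraph m) D := by
  rintro (_ | ⟨i, t⟩)
  · exact Or.inl hc
  · fin_cases t
    · exact Or.inr ⟨none, hc, adj_none i 0 (by decide)⟩
    · obtain ⟨u, huD, huT⟩ := h i
      rcases mem_Tcopy.mp huT with rfl | rfl | rfl
      · exact Or.inr ⟨_, huD, adj_a_b i⟩
      · exact Or.inl huD
      · exact Or.inr ⟨_, huD, (adj_b_d i).symm⟩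
    · exact Or.inr ⟨none, hc, adj_none i 2 (by decide)⟩

lemma copy_nonempty {D : Finset (Option (Fin m × Fin 3))}
    (hD : IsDomSet (Hgraph m) D) (i : Fin m) : ∃ u ∈ D, u ∈ Tcopy m i := by
  rcases hD (some (i,1)) with h | ⟨u, huD, hadj⟩
  · exact ⟨_, h, by simp [mem_Tcopy]⟩
  · rcases (adj_b_iff i u).mp hadj.symm with rfl | rfl
    · exact ⟨_, huD, by simp [mem_Tcopy]⟩
    · exact ⟨_, huD, by simp [mem_Tcopy]⟩

lemma dom_card {D : Finset (Option (Fin m × Fin 3))} (hm : 3 ≤ m)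
    (hD : IsDomSet (Hgraph m) D) : m + 1 ≤ D.card := by
  classical
  have hdisj : ∀ i ∈ (Finset.univ : Finset (Fin m)), ∀ j ∈ Finset.univ, i ≠ j →
      Disjoint (D ∩ Tcopy m i) (D ∩ Tcopy m j) := by
    intro i _ j _ hij
    rw [Finset.disjoint_left]
    intro x hxi hxj
    exact Tcopy_ne hij (Finset.mem_inter.mp hxi).2 (Finset.mem_inter.mp hxj).2 rfl
  set U := Finset.univ.biUnion (fun i => D ∩ Tcopy m i) with hU
  have hUcard : U.card = ∑ i, (D ∩ Tcopy m i).card := Finset.card_biUnion hdisj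
  have hUsub : U ⊆ D := by
    intro x hx
    obtain ⟨i, _, hxi⟩ := Finset.mem_biUnion.mp hx
    exact (Finset.mem_inter.mp hxi).1
  have hone : ∀ i, 1 ≤ (D ∩ Tcopy m i).card := by
    intro i
    obtain ⟨u, huD, huT⟩ := copy_nonempty hD i
    exact Finset.card_pos.mpr ⟨u, Finset.mem_inter.mpr ⟨huD, huT⟩⟩
  by_cases hc : none ∈ D
  · have hni : none ∉ U := by
      intro h
      obtain ⟨i, _, hxi⟩ := Finset.mem_biUnion.mp h
      rcases mem_Tcopy.mp (Finset.mem_inter.mp hxi).2 with h | h | h <;> simp at h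
    have h1 : insert none U ⊆ D := Finset.insert_subset hc hUsub
    have h2 : m ≤ U.card := by
      rw [hUcard]
      calc (m : ℕ) = ∑ _i : Fin m, 1 := by simp
        _ ≤ _ := Finset.sum_le_sum (fun i _ => hone i)
    have := Finset.card_le_card h1
    rw [Finset.card_insert_of_notMem hni] at this
    omega
  · -- `none` is dominated by some `a i` or `d i`
    rcases hD none with h | ⟨u, huD, hadj⟩
    · exact absurd h hc
    obtain ⟨i, hu⟩ := (adj_none_iff u).mp hadj.symm
    have htwo : 2 ≤ (D ∩ Tcopy m i).card := by
      rcases hu with rfl | rfl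
      · -- u = a i ; then d i must be dominated by b i or itself
        rcases hD (some (i,2)) with h | ⟨w, hwD, hadjw⟩
        · refine Finset.one_lt_card.mpr ⟨_, Finset.mem_inter.mpr ⟨huD, by simp [mem_Tcopy]⟩,
            _, Finset.mem_inter.mpr ⟨h, by simp [mem_Tcopy]⟩, ?_⟩
          simp [Prod.ext_iff, Fin.ext_iff]
        · rcases (adj_d_iff i w).mp hadjw.symm with rfl | rfl
          · exact absurd hwD hc
          · refine Finset.one_lt_card.mpr ⟨_, Finset.mem_inter.mpr ⟨huD, by simp [mem_Tcopy]⟩,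
              _, Finset.mem_inter.mpr ⟨hwD, by simp [mem_Tcopy]⟩, ?_⟩
            simp [Prod.ext_iff, Fin.ext_iff]
      · -- u = d i ; then a i must be dominated by b i or itself
        rcases hD (some (i,0)) with h | ⟨w, hwD, hadjw⟩
        · refine Finset.one_lt_card.mpr ⟨_, Finset.mem_inter.mpr ⟨huD, by simp [mem_Tcopy]⟩,
            _, Finset.mem_inter.mpr ⟨h, by simp [mem_Tcopy]⟩, ?_⟩
          simp [Prod.ext_iff, Fin.ext_iff]
        · rcases (adj_a_iff i w).mp hadjw.symm with rfl | rfl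
          · exact absurd hwD hc
          · refine Finset.one_lt_card.mpr ⟨_, Finset.mem_inter.mpr ⟨huD, by simp [mem_Tcopy]⟩,
              _, Finset.mem_inter.mpr ⟨hwD, by simp [mem_Tcopy]⟩, ?_⟩
            simp [Prod.ext_iff, Fin.ext_iff]
    have hsum : m + 1 ≤ ∑ j, (D ∩ Tcopy m j).card := by
      rw [← Finset.sum_erase_add _ _ (Finset.mem_univ i)]
      have h3 : (Finset.univ.erase i).card • 1 ≤ ∑ j ∈ Finset.univ.erase i, (D ∩ Tcopy m j).card :=
        Finset.card_nsmul_le_sum _ _ _ (fun j _ => hone j)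
      have h4 : (Finset.univ.erase i).card = m - 1 := by
        rw [Finset.card_erase_of_mem (Finset.mem_univ i)]; simp
      simp only [smul_eq_mul, mul_one] at h3
      omega
    have := Finset.card_le_card hUsub
    omega

end Dom
section GameStrat
variable {m : ℕ}

/-- Dominator's pairing strategy: having taken the centre plus one vertex of
every "secured" copy, he answers every Staller move inside an unsecured copy. -/
lemma dom_strategy (m : ℕ) :
    ∀ (n : ℕ) (I : Finset (Fin m)) (D S : Finset (Option (Fin m × Fin 3))),
      I.card = n → none ∈ D →
      (∀ i, i ∉ I → ∃ u ∈ D, u ∈ Tcopy m i) →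
      (∀ i ∈ I, ∀ v ∈ Tcopy m i, v ∉ D ∧ v ∉ S) →
      DomWinS (Hgraph m) D S n := by
  intro n
  induction n with
  | zero =>
      intro I D S hI hc hsec _
      have hIe : I = ∅ := Finset.card_eq_zero.mp hI
      exact DomWinS.done _ _ _ (isDom_of D hc (fun i => hsec i (by simp [hIe])))
  | succ n IH =>
      intro I D S hI hc hsec hfree
      obtain ⟨i₀, hi₀⟩ : I.Nonempty := Finset.card_pos.mp (by omega)
      have ha₀ : (some (i₀,0) : Option (Fin m × Fin 3)) ∈ Tcopy m i₀ := by simp [mem_Tcopy]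
      refine DomWinS.step _ _ _ ⟨some (i₀,0), (hfree i₀ hi₀ _ ha₀).1, (hfree i₀ hi₀ _ ha₀).2⟩ ?_
      intro w hwD hwS
      by_cases hw : ∃ i ∈ I, w ∈ Tcopy m i
      · obtain ⟨i, hiI, hwi⟩ := hw
        have hcard : (I.erase i).card = n := by
          rw [Finset.card_erase_of_mem hiI, hI]; omega
        set v : Option (Fin m × Fin 3) :=
          if w = some (i,0) then some (i,1) else some (i,0) with hv
        have hvT : v ∈ Tcopy m i := by
          rw [hv]; split <;> simp [mem_Tcopy]
        have hvw : v ≠ w := by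
          rw [hv]; split
          · rename_i h; rw [h]; simp [Prod.ext_iff, Fin.ext_iff]
          · rename_i h; exact fun hh => h hh.symm
        refine DomWinD.step _ _ _ v (hfree i hiI v hvT).1 ?_ ?_
        · simp only [Finset.mem_insert, not_or]
          exact ⟨hvw, (hfree i hiI v hvT).2⟩
        refine IH (I.erase i) _ _ hcard (Finset.mem_insert_of_mem hc) ?_ ?_
        · intro i' hi'
          by_cases h : i' = i
          · exact ⟨v, Finset.mem_insert_self _ _, h ▸ hvT⟩
          · obtain ⟨u, huD, huT⟩ := hsec i' (fun hh => hi' (Finset.mem_erase.mpr ⟨h, hh⟩))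
            exact ⟨u, Finset.mem_insert_of_mem huD, huT⟩
        · intro i' hi' u huT
          obtain ⟨hne, hi'I⟩ := Finset.mem_erase.mp hi'
          obtain ⟨h1, h2⟩ := hfree i' hi'I u huT
          refine ⟨?_, ?_⟩ <;> simp only [Finset.mem_insert, not_or]
          · exact ⟨Tcopy_ne hne huT hvT, h1⟩
          · exact ⟨Tcopy_ne hne huT hwi, h2⟩
      · -- Staller played outside the unsecured copies
        push_neg at hw
        have hcard : (I.erase i₀).card = n := by
          rw [Finset.card_erase_of_mem hi₀, hI]; omega
        have hvw : (some (i₀,0) : Option (Fin m × Fin 3)) ≠ w :=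
          fun hh => hw i₀ hi₀ (hh ▸ ha₀)
        refine DomWinD.step _ _ _ (some (i₀,0)) (hfree i₀ hi₀ _ ha₀).1 ?_ ?_
        · simp only [Finset.mem_insert, not_or]
          exact ⟨hvw, (hfree i₀ hi₀ _ ha₀).2⟩
        refine IH (I.erase i₀) _ _ hcard (Finset.mem_insert_of_mem hc) ?_ ?_
        · intro i' hi'
          by_cases h : i' = i₀
          · exact ⟨some (i₀,0), Finset.mem_insert_self _ _, h ▸ ha₀⟩
          · obtain ⟨u, huD, huT⟩ := hsec i' (fun hh => hi' (Finset.mem_erase.mpr ⟨h, hh⟩))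
            exact ⟨u, Finset.mem_insert_of_mem huD, huT⟩
        · intro i' hi' u huT
          obtain ⟨hne, hi'I⟩ := Finset.mem_erase.mp hi'
          obtain ⟨h1, h2⟩ := hfree i' hi'I u huT
          refine ⟨?_, ?_⟩ <;> simp only [Finset.mem_insert, not_or]
          · exact ⟨Tcopy_ne hne huT ha₀, h1⟩
          · exact ⟨fun hh => hw i' hi'I (hh ▸ huT), h2⟩

lemma dom_win (m : ℕ) : DomWinD (Hgraph m) ∅ ∅ (m + 1) := by
  refine DomWinD.step _ _ _ none (by simp) (by simp) ?_
  refine dom_strategy m m Finset.univ _ _ (by simp) (by simp) (by simp) ?_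
  intro i _ v hvT
  refine ⟨?_, by simp⟩
  simp only [Finset.mem_insert, Finset.notMem_empty, or_false]
  rcases mem_Tcopy.mp hvT with rfl | rfl | rfl <;> simp

end GameStrat
section WinDom
variable {V : Type*} [DecidableEq V] {G : SimpleGraph V}

/-- If Dominator can win with `n` further moves, there is a dominating set of
size at most `|D| + n`. -/
lemma winDom {D S : Finset V} {n : ℕ} (h : DomWinD G D S n) :
    ∃ D' : Finset V, IsDomSet G D' ∧ D'.card ≤ D.card + n :=
  DomWinD.rec
    (motive_1 := fun D _ n _ => ∃ D' : Finset V, IsDomSet G D' ∧ D'.card ≤ D.card + n)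
    (motive_2 := fun D _ n _ => ∃ D' : Finset V, IsDomSet G D' ∧ D'.card ≤ D.card + n)
    (fun D _ k hdom => ⟨D, hdom, Nat.le_add_right _ _⟩)
    (fun D _ k v _ _ _ IH => by
      obtain ⟨D', h1, h2⟩ := IH
      refine ⟨D', h1, ?_⟩
      have := Finset.card_insert_le v D
      omega)
    (fun D _ k hdom => ⟨D, hdom, Nat.le_add_right _ _⟩)
    (fun D S k hex _ IH => by
      obtain ⟨w, hwD, hwS⟩ := hex
      exact IH w hwD hwS)
    h

end WinDom
section Staller

lemma staller_win (m : ℕ) (hm : 3 ≤ m) : StalWinS (Hgraph m) ∅ ∅ 3 := by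
  have hm' : Nontrivial (Fin m) :=
    ⟨⟨⟨0, by omega⟩, ⟨1, by omega⟩, by simp [Fin.ext_iff]⟩⟩
  -- Staller plays the centre first.
  refine StalWinS.step _ _ 2 none (by simp) (by simp) ?_
  refine StalWinD.step _ _ 2 ⟨some (⟨0, by omega⟩, 1), by simp, by simp⟩ ?_
  intro v hvD hvS
  -- Dominator played `v ≠ none`; pick a copy `i` avoided by `v`.
  have hvn : v ≠ none := by simpa using hvS
  obtain ⟨j, t, rfl⟩ : ∃ j : Fin m, ∃ t : Fin 3, v = some (j, t) := by
    rcases v with _ | ⟨j, t⟩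
    · exact absurd rfl hvn
    · exact ⟨j, t, rfl⟩
  obtain ⟨i, hij⟩ := exists_ne j
  have hiv : ∀ s : Fin 3, some (i, s) ≠ some (j, t) := by
    intro s h
    exact hij (Prod.ext_iff.mp (Option.some.inj h)).1
  -- Staller plays `b i`.
  refine StalWinS.step _ _ 1 (some (i,1)) ?_ ?_ ?_
  · simp [hiv 1]
  · simp
  refine StalWinD.step _ _ 1 ⟨some (i,0), ?_, ?_⟩ ?_
  · simp [hiv 0]
  · simp [Prod.ext_iff, Fin.ext_iff]
  intro w hwD hwS
  -- Staller takes whichever of `a i`, `d i` is still free.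
  by_cases hw : w = some (i,0)
  · subst hw
    refine StalWinS.step _ _ 0 (some (i,2)) ?_ ?_ (StalWinD.done _ _ _ ?_)
    · simp [hiv 2, Prod.ext_iff, Fin.ext_iff]
    · simp [Prod.ext_iff, Fin.ext_iff]
    · refine ⟨some (i,2), by simp, ?_⟩
      intro u hu
      rcases (adj_d_iff i u).mp hu with rfl | rfl <;> simp
  · refine StalWinS.step _ _ 0 (some (i,0)) ?_ ?_ (StalWinD.done _ _ _ ?_)
    · simp [hiv 0, Ne.symm hw]
    · simp [Prod.ext_iff, Fin.ext_iff]
    · refine ⟨some (i,0), by simp, ?_⟩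
      intro u hu
      rcases (adj_a_iff i u).mp hu with rfl | rfl <;> simp

end Staller
/-- For `m ≥ 3`: `o(H_m) = 𝒩` and `γ_MB(H_m) = γ(H_m) = m + 1`. -/
theorem Hgraph_outcome_and_gammaMB (m : ℕ) (hm : 3 ≤ m) :
    OutcomeN (Hgraph m) ∧
    gammaMB (Hgraph m) = ((m + 1 : ℕ) : ℕ∞) ∧
    domNumber (Hgraph m) = m + 1 := by
  classical
  -- the explicit minimum dominating set `{c} ∪ {b i}`
  set D₀ : Finset (Option (Fin m × Fin 3)) :=
    insert none (Finset.univ.image fun i : Fin m => (some (i,1) : Option (Fin m × Fin 3)))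
    with hD₀
  have hD₀card : D₀.card = m + 1 := by
    rw [hD₀, Finset.card_insert_of_notMem (by simp),
      Finset.card_image_of_injective _ (fun a b h => by
        exact (Prod.ext_iff.mp (Option.some.inj h)).1)]
    simp
  have hD₀dom : IsDomSet (Hgraph m) D₀ := by
    refine isDom_of D₀ (Finset.mem_insert_self _ _) (fun i => ?_)
    exact ⟨some (i,1), Finset.mem_insert_of_mem
      (Finset.mem_image.mpr ⟨i, Finset.mem_univ i, rfl⟩), by simp [mem_Tcopy]⟩
  refine ⟨⟨⟨m + 1, dom_win m⟩, ⟨3, staller_win m hm⟩⟩, ?_, ?_⟩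
  · -- `γ_MB = m + 1`
    refine le_antisymm (sInf_le ⟨m + 1, rfl, dom_win m⟩) (le_sInf ?_)
    rintro k ⟨n, rfl, hn⟩
    obtain ⟨D', h1, h2⟩ := winDom hn
    have h3 := dom_card hm h1
    simp only [Finset.card_empty, zero_add] at h2
    exact_mod_cast (by omega : m + 1 ≤ n)
  · -- `γ = m + 1`
    refine le_antisymm (Nat.sInf_le ⟨D₀, hD₀card, hD₀dom⟩) (le_csInf ⟨m + 1, D₀, hD₀card, hD₀dom⟩ ?_)
    rintro n ⟨D, rfl, hD⟩
    exact dom_card hm hD
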